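/- There exists a constant K ∈ [0,∞), depending only on C, such that for all measurable u, h : Ω → ℝ one has ‖F̂(u+h) − F̂(u) − f̂(u)·h‖_{L¹} ≤ (K‖h‖_{L²} + K(‖u‖_{L⁶}² + ‖h‖_{L⁶}²)·‖h‖_{L⁶})·‖h‖_{L²}, where f̂(u)·h denotes the pointwise product x ↦ f(x,u(x))·h(x). -/

import Mathlib

open MeasureTheory intervalIntegral
open scoped ENNReal NNReal

lemma ptwise_bound (g : ℝ → ℝ) (hg : ContDiff ℝ 1 g) (C : ℝ) (hC : 0 ≤ C)
    (hd : ∀ t : ℝ, |deriv g t| ≤ C * (1 + |t| ^ 2)) (a b : ℝ) :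
    |(∫ s in (0:ℝ)..(a + b), g s) - (∫ s in (0:ℝ)..a, g s) - g a * b|
      ≤ C * b ^ 2 + 2 * C * (a ^ 2 + b ^ 2) * b ^ 2 := by
  have hcont := hg.continuous
  have hInt : ∀ p q : ℝ, IntervalIntegrable g volume p q :=
    fun p q => (hcont.intervalIntegrable p q)
  have h1 : (∫ s in (0:ℝ)..(a + b), g s) - (∫ s in (0:ℝ)..a, g s)
      = ∫ s in a..(a + b), g s := by
    rw [← integral_add_adjacent_intervals (hInt 0 a) (hInt a (a + b))]
    ring
  have h2 : (∫ s in a..(a + b), g s) - g a * b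
      = ∫ s in a..(a + b), (g s - g a) := by
    rw [intervalIntegral.integral_sub (hInt a (a + b))
      (intervalIntegrable_const), intervalIntegral.integral_const]
    simp [smul_eq_mul]
    ring
  rw [h1, h2]
  set M : ℝ := C * (1 + (|a| + |b|) ^ 2) with hM
  have key : ∀ s ∈ Set.uIoc a (a + b), |g s - g a| ≤ M * |b| := by
    intro s hs
    have hs' : s ∈ Set.uIcc a (a + b) := Set.uIoc_subset_uIcc hs
    have hbound : ∀ t ∈ Set.uIcc a (a + b), ‖deriv g t‖ ≤ M := by
      intro t ht
      rw [Set.mem_uIcc] at ht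
      have h1 : |t| ≤ |a| + |b| := by
        rcases ht with ⟨h₁, h₂⟩ | ⟨h₁, h₂⟩ <;>
        · rw [abs_le]
          constructor <;>
            nlinarith [le_abs_self a, neg_abs_le a, le_abs_self b, neg_abs_le b]
      calc ‖deriv g t‖ = |deriv g t| := rfl
        _ ≤ C * (1 + |t| ^ 2) := hd t
        _ ≤ M := by
            rw [hM]
            have ht2 : |t| ^ 2 ≤ (|a| + |b|) ^ 2 := by nlinarith [abs_nonneg t]
            nlinarith [mul_le_mul_of_nonneg_left ht2 hC]
    have := Convex.norm_image_sub_le_of_norm_deriv_le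
      (fun t _ => (hg.differentiable one_ne_zero).differentiableAt)
      hbound (convex_uIcc a (a + b)) (Set.left_mem_uIcc) hs'
    have hsa : ‖s - a‖ ≤ |b| := by
      rw [Set.mem_uIcc] at hs'
      rw [Real.norm_eq_abs, abs_le]
      constructor <;>
        (rcases hs' with ⟨h₁, h₂⟩ | ⟨h₁, h₂⟩ <;>
          nlinarith [le_abs_self b, neg_abs_le b])
    have hM0 : 0 ≤ M := by positivity
    calc |g s - g a| ≤ M * ‖s - a‖ := this
      _ ≤ M * |b| := by nlinarith
  have := intervalIntegral.norm_integral_le_of_norm_le_const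
    (C := M * |b|) (f := fun s => g s - g a) (a := a) (b := a + b) key
  simp only [add_sub_cancel_left] at this
  have hb : |b| * |b| = b ^ 2 := by rw [← sq_abs]; ring
  have hMb : M * |b| * |b| = M * b ^ 2 := by rw [mul_assoc, hb]
  calc |∫ s in a..(a + b), (g s - g a)| ≤ M * |b| * |b| := this
    _ = M * b ^ 2 := hMb
    _ ≤ C * b ^ 2 + 2 * C * (a ^ 2 + b ^ 2) * b ^ 2 := by
      rw [hM]
      have hX : (|a| + |b|) ^ 2 ≤ 2 * (a ^ 2 + b ^ 2) := by
        nlinarith [sq_nonneg (|a| - |b|), sq_abs a, sq_abs b]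
      nlinarith [mul_le_mul_of_nonneg_right (mul_le_mul_of_nonneg_left hX hC) (sq_nonneg b),
        mul_nonneg hC (sq_nonneg b)]

lemma sq_eLpNorm (w : (Fin 3 → ℝ) → ℝ) (μ : Measure (Fin 3 → ℝ)) (p : ℝ≥0∞) :
    eLpNorm (fun x => w x ^ 2) p μ = eLpNorm w (p * 2) μ ^ 2 := by
  have h := eLpNorm_norm_rpow (p := p) (μ := μ) w (q := (2:ℝ)) (by norm_num)
  have h1 : (fun x => ‖w x‖ ^ (2:ℝ)) = fun x => w x ^ 2 := by
    ext x
    rw [Real.norm_eq_abs, show (2:ℝ) = ((2:ℕ):ℝ) by norm_num, Real.rpow_natCast, sq_abs]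
  have h2 : ENNReal.ofReal (2:ℝ) = 2 := by
    simp [ENNReal.ofReal_ofNat]
  rw [h1, h2] at h
  rw [h, ← ENNReal.rpow_natCast _ 2]
  norm_num

/-- With `F(x,u) = ∫₀ᵘ f(x,s) ds` whenever `f(x,·)` is continuous and
`F(x,u) = 0` otherwise, under the growth assumption `|∂_u f(x,u)| ≤ C (1+|u|²)` a.e. on
`Ω`, there is a constant `K ∈ [0,∞)` depending only on `C` such that for all measurable
`u, h : Ω → ℝ` one has
`‖F̂(u+h) − F̂(u) − f̂(u)·h‖_{L¹} ≤ (K‖h‖_{L²} + K(‖u‖_{L⁶}² + ‖h‖_{L⁶}²)‖h‖_{L⁶}) ‖h‖_{L²}`. -/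
theorem stmt9 (Ω : Set (Fin 3 → ℝ)) (hΩ : IsOpen Ω)
    (f : (Fin 3 → ℝ) → ℝ → ℝ)
    (hmeas : ∀ u : ℝ, Measurable fun x => f x u)
    (C : ℝ) (hC : 0 ≤ C)
    (hf : ∀ᵐ x ∂(volume.restrict Ω),
      ContDiff ℝ 1 (f x) ∧ ∀ u : ℝ, |deriv (f x) u| ≤ C * (1 + |u| ^ 2))
    (F : (Fin 3 → ℝ) → ℝ → ℝ)
    (hF : ∀ (x : Fin 3 → ℝ) (u : ℝ),
      (Continuous (f x) → F x u = ∫ s in (0 : ℝ)..u, f x s) ∧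
      (¬ Continuous (f x) → F x u = 0)) :
    ∃ K : ℝ≥0, ∀ u h : (Fin 3 → ℝ) → ℝ, Measurable u → Measurable h →
      eLpNorm (fun x => F x (u x + h x) - F x (u x) - f x (u x) * h x) 1
          (volume.restrict Ω) ≤
        ((K : ℝ≥0∞) * eLpNorm h 2 (volume.restrict Ω)
            + (K : ℝ≥0∞) * (eLpNorm u 6 (volume.restrict Ω) ^ 2
                + eLpNorm h 6 (volume.restrict Ω) ^ 2)
              * eLpNorm h 6 (volume.restrict Ω))
          * eLpNorm h 2 (volume.restrict Ω) := by
  set μ := volume.restrict Ω with hμ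
  refine ⟨(2 * C).toNNReal, fun u h hu hh => ?_⟩
  set K : ℝ≥0 := (2 * C).toNNReal with hK
  -- pointwise bound
  have hpt : ∀ᵐ x ∂μ,
      ‖F x (u x + h x) - F x (u x) - f x (u x) * h x‖
        ≤ ‖C * h x ^ 2 + 2 * C * (u x ^ 2 + h x ^ 2) * h x ^ 2‖ := by
    filter_upwards [hf] with x hx
    obtain ⟨hx1, hx2⟩ := hx
    have hc : Continuous (f x) := hx1.continuous
    rw [(hF x (u x + h x)).1 hc, (hF x (u x)).1 hc, Real.norm_eq_abs]
    refine le_trans ?_ (le_abs_self _)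
    exact ptwise_bound (f x) hx1 C hC hx2 (u x) (h x)
  have step1 := eLpNorm_mono_ae (p := 1) hpt
  -- split
  have hm1 : AEStronglyMeasurable (fun x => C * h x ^ 2) μ :=
    ((hh.pow_const 2).const_mul C).aestronglyMeasurable
  have hm2 : AEStronglyMeasurable
      (fun x => 2 * C * (u x ^ 2 + h x ^ 2) * h x ^ 2) μ :=
    ((((hu.pow_const 2).add (hh.pow_const 2)).const_mul (2*C)).mul
      (hh.pow_const 2)).aestronglyMeasurable
  have step2 : eLpNorm
      (fun x => C * h x ^ 2 + 2 * C * (u x ^ 2 + h x ^ 2) * h x ^ 2) 1 μ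
      ≤ eLpNorm (fun x => C * h x ^ 2) 1 μ
        + eLpNorm (fun x => 2 * C * (u x ^ 2 + h x ^ 2) * h x ^ 2) 1 μ :=
    eLpNorm_add_le hm1 hm2 le_rfl
  -- coefficient facts
  have hCK : (‖C‖₊ : ℝ≥0∞) ≤ (K : ℝ≥0∞) := by
    rw [ENNReal.coe_le_coe, hK, Real.nnnorm_of_nonneg hC, ← Real.toNNReal_of_nonneg hC]
    exact Real.toNNReal_le_toNNReal (by linarith)
  have h2CK : (‖2 * C‖₊ : ℝ≥0∞) = (K : ℝ≥0∞) := by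
    rw [ENNReal.coe_inj, hK, Real.nnnorm_of_nonneg (by linarith : (0:ℝ) ≤ 2 * C),
      ← Real.toNNReal_of_nonneg (by linarith : (0:ℝ) ≤ 2 * C)]
  -- first piece
  have e1 : eLpNorm (fun x => C * h x ^ 2) 1 μ
      ≤ (K : ℝ≥0∞) * eLpNorm h 2 μ * eLpNorm h 2 μ := by
    have hrw : (fun x => C * h x ^ 2) = C • (fun x => h x ^ 2) := by
      ext x; simp [smul_eq_mul]
    rw [hrw, eLpNorm_const_smul, enorm_eq_nnnorm, sq_eLpNorm h μ 1, one_mul, sq, ← mul_assoc]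
    gcongr
  -- second piece
  set φ : (Fin 3 → ℝ) → ℝ := fun x => (u x ^ 2 + h x ^ 2) * h x with hφdef
  set ψ : (Fin 3 → ℝ) → ℝ := fun x => u x ^ 2 + h x ^ 2 with hψdef
  have hφm : AEStronglyMeasurable φ μ :=
    (((hu.pow_const 2).add (hh.pow_const 2)).mul hh).aestronglyMeasurable
  have hψm : AEStronglyMeasurable ψ μ :=
    ((hu.pow_const 2).add (hh.pow_const 2)).aestronglyMeasurable
  have hhm : AEStronglyMeasurable h μ := hh.aestronglyMeasurable
  have hold1 : eLpNorm (fun x => φ x * h x) 1 μ ≤ eLpNorm φ 2 μ * eLpNorm h 2 μ := by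
    have : (fun x => φ x * h x) = φ • h := rfl
    rw [this]
    exact eLpNorm_smul_le_mul_eLpNorm (hpqr := ⟨by rw [inv_one, ← one_div, ENNReal.add_halves]⟩) hhm hφm
  have hold2 : eLpNorm φ 2 μ ≤ eLpNorm ψ 3 μ * eLpNorm h 6 μ := by
    have : φ = ψ • h := rfl
    rw [this]
    refine eLpNorm_smul_le_mul_eLpNorm (hpqr := ⟨?_⟩) hhm hψm
    have h3 : ((3:ℝ≥0):ℝ≥0∞) = 3 := by norm_num
    have h6 : ((6:ℝ≥0):ℝ≥0∞) = 6 := by norm_num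
    have h2 : ((2:ℝ≥0):ℝ≥0∞) = 2 := by norm_num
    rw [← h3, ← h6, ← h2, ← ENNReal.coe_inv (by norm_num : (3:ℝ≥0) ≠ 0),
      ← ENNReal.coe_inv (by norm_num : (6:ℝ≥0) ≠ 0), ← ENNReal.coe_inv (by norm_num : (2:ℝ≥0) ≠ 0), ← ENNReal.coe_add,
      ENNReal.coe_inj]
    ext; norm_num
  have hψ3 : eLpNorm ψ 3 μ ≤ eLpNorm u 6 μ ^ 2 + eLpNorm h 6 μ ^ 2 := by
    have := eLpNorm_add_le (p := 3)
      ((hu.pow_const 2).aestronglyMeasurable (μ := μ))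
      ((hh.pow_const 2).aestronglyMeasurable (μ := μ)) (by norm_num)
    have h36 : (3 : ℝ≥0∞) * 2 = 6 := by norm_num
    calc eLpNorm ψ 3 μ
        ≤ eLpNorm (fun x => u x ^ 2) 3 μ + eLpNorm (fun x => h x ^ 2) 3 μ := this
      _ = eLpNorm u 6 μ ^ 2 + eLpNorm h 6 μ ^ 2 := by
          rw [sq_eLpNorm u μ 3, sq_eLpNorm h μ 3, h36]
  have e2 : eLpNorm (fun x => 2 * C * (u x ^ 2 + h x ^ 2) * h x ^ 2) 1 μ
      ≤ (K : ℝ≥0∞) * (eLpNorm u 6 μ ^ 2 + eLpNorm h 6 μ ^ 2) * eLpNorm h 6 μ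
          * eLpNorm h 2 μ := by
    have hrw : (fun x => 2 * C * (u x ^ 2 + h x ^ 2) * h x ^ 2)
        = (2 * C) • (fun x => φ x * h x) := by
      ext x; simp only [Pi.smul_apply, smul_eq_mul, hφdef]; ring
    rw [hrw, eLpNorm_const_smul, enorm_eq_nnnorm, h2CK]

    calc (K : ℝ≥0∞) * eLpNorm (fun x => φ x * h x) 1 μ
        ≤ (K : ℝ≥0∞) * (eLpNorm φ 2 μ * eLpNorm h 2 μ) := by gcongr
      _ ≤ (K : ℝ≥0∞) * ((eLpNorm ψ 3 μ * eLpNorm h 6 μ) * eLpNorm h 2 μ) := by gcongr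
      _ ≤ (K : ℝ≥0∞) * (((eLpNorm u 6 μ ^ 2 + eLpNorm h 6 μ ^ 2) * eLpNorm h 6 μ)
            * eLpNorm h 2 μ) := by gcongr
      _ = (K : ℝ≥0∞) * (eLpNorm u 6 μ ^ 2 + eLpNorm h 6 μ ^ 2) * eLpNorm h 6 μ
            * eLpNorm h 2 μ := by ring
  calc eLpNorm (fun x => F x (u x + h x) - F x (u x) - f x (u x) * h x) 1 μ
      ≤ eLpNorm
        (fun x => C * h x ^ 2 + 2 * C * (u x ^ 2 + h x ^ 2) * h x ^ 2) 1 μ := step1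
    _ ≤ eLpNorm (fun x => C * h x ^ 2) 1 μ
        + eLpNorm (fun x => 2 * C * (u x ^ 2 + h x ^ 2) * h x ^ 2) 1 μ := step2
    _ ≤ (K : ℝ≥0∞) * eLpNorm h 2 μ * eLpNorm h 2 μ
        + (K : ℝ≥0∞) * (eLpNorm u 6 μ ^ 2 + eLpNorm h 6 μ ^ 2) * eLpNorm h 6 μ
          * eLpNorm h 2 μ := add_le_add e1 e2
    _ = ((K : ℝ≥0∞) * eLpNorm h 2 μ
        + (K : ℝ≥0∞) * (eLpNorm u 6 μ ^ 2 + eLpNorm h 6 μ ^ 2) * eLpNorm h 6 μ)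
          * eLpNorm h 2 μ := by ring
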